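/- Let P ∈ 𝕊₊ⁿ and let η = c·∇h(y)/(∇h(y)ᵀP⁻¹∇h(y)) with c ≤ 0 and ∇h(y) ≠ 0, and suppose ‖∇h(x)‖ ≤ ‖∇h(y)‖ + L·‖x−y‖ and |c| ≤ ‖f‖·‖∇h(x)‖ (Cauchy–Schwarz from c = ∇h(x)ᵀf + αh(x) with h(x) ≥ 0, αh(x) ≤ −∇h(x)ᵀf giving |c| ≤ |∇h(x)ᵀf|). Then ‖P⁻¹η‖ ≤ (1 + L‖x−y‖/‖∇h(y)‖)·(λ_max(P)/λ_min(P))·‖f‖. -/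
import Mathlib


open Metric Set
open scoped RealInnerProductSpace

/-- bound on the normal-cone perturbation term `‖P⁻¹η‖`.
`Q` plays the role of `P⁻¹`; `u = ∇h(x)`, `v = ∇h(y)` abstractly. -/
theorem stmt17 {n : ℕ}
    (P Q : EuclideanSpace ℝ (Fin n) →L[ℝ] EuclideanSpace ℝ (Fin n))
    (lmin lmax : ℝ) (hlmin : 0 < lmin) (hlmax : lmin ≤ lmax)
    (hPlow : ∀ w : EuclideanSpace ℝ (Fin n), lmin * ‖w‖ ^ 2 ≤ ⟪w, P w⟫)
    (hPhigh : ∀ w : EuclideanSpace ℝ (Fin n), ⟪w, P w⟫ ≤ lmax * ‖w‖ ^ 2)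
    (hQlow : ∀ w : EuclideanSpace ℝ (Fin n), ‖w‖ ^ 2 / lmax ≤ ⟪w, Q w⟫)
    (hQhigh : ∀ w : EuclideanSpace ℝ (Fin n), ⟪w, Q w⟫ ≤ ‖w‖ ^ 2 / lmin)
    (hPQ : ∀ w, P (Q w) = w) (hQP : ∀ w, Q (P w) = w)
    (fv : EuclideanSpace ℝ (Fin n)) (L : ℝ) (hL : 0 ≤ L)
    (x y u v : EuclideanSpace ℝ (Fin n))
    (hv0 : v ≠ 0) (hgrow : ‖u‖ ≤ ‖v‖ + L * ‖x - y‖)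
    (c : ℝ) (hc0 : c ≤ 0) (hcb : |c| ≤ ‖fv‖ * ‖u‖)
    (η : EuclideanSpace ℝ (Fin n)) (hη : η = (c / ⟪v, Q v⟫) • v) :
    ‖Q η‖ ≤ (1 + L * ‖x - y‖ / ‖v‖) * (lmax / lmin) * ‖fv‖ := by
  have hv : 0 < ‖v‖ := norm_pos_iff.mpr hv0
  have hlmax0 : 0 < lmax := lt_of_lt_of_le hlmin hlmax
  have hA : ‖v‖ ^ 2 / lmax ≤ ⟪v, Q v⟫ := hQlow v
  have hpos : 0 < ⟪v, Q v⟫ := lt_of_lt_of_le (by positivity) hA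
  have hQvnorm : ‖Q v‖ * lmin ≤ ‖v‖ := by
    have h1 : lmin * ‖Q v‖ ^ 2 ≤ ⟪Q v, P (Q v)⟫ := hPlow (Q v)
    rw [hPQ] at h1
    have h2 : ⟪Q v, v⟫ ≤ ‖Q v‖ * ‖v‖ := real_inner_le_norm _ _
    nlinarith [norm_nonneg (Q v), norm_nonneg v]
  have hQη : Q η = (c / ⟪v, Q v⟫) • Q v := by rw [hη, map_smul]
  have hnorm : ‖Q η‖ = |c| / ⟪v, Q v⟫ * ‖Q v‖ := by
    rw [hQη, norm_smul, Real.norm_eq_abs, abs_div, abs_of_pos hpos]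
  have hcle : |c| ≤ ‖fv‖ * (‖v‖ + L * ‖x - y‖) := by
    refine le_trans hcb ?_
    have := norm_nonneg fv
    nlinarith
  have hRHS : (1 + L * ‖x - y‖ / ‖v‖) * (lmax / lmin) * ‖fv‖
      = (‖v‖ + L * ‖x - y‖) * lmax * ‖fv‖ / (‖v‖ * lmin) := by
    field_simp
  rw [hnorm, hRHS, div_mul_eq_mul_div, div_le_div_iff₀ hpos (by positivity)]
  have hAl : ‖v‖ ^ 2 ≤ lmax * ⟪v, Q v⟫ := by
    rw [div_le_iff₀ hlmax0] at hA; linarith [hA]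
  nlinarith [abs_nonneg c, norm_nonneg (Q v), norm_nonneg fv, norm_nonneg (x - y),
    mul_le_mul hcle hQvnorm (by positivity) (by positivity),
    mul_le_mul_of_nonneg_left hAl (mul_nonneg (norm_nonneg fv) (by positivity : (0:ℝ) ≤ ‖v‖ + L * ‖x - y‖))]
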